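/- Let φ : M_{n_1 n_2}(ℂ) → M_{n_1 n_2}(ℂ) be defined by φ(A) = M A^R Nᵀ, where A^R is the realignment (an n_1² × n_2² matrix), M is n_1 n_2 × n_1², and N is n_1 n_2 × n_2². If Ker(M) ∩ (ℂ^{n_1} ⊗ ℂ^{n_1}) = {0} and Ker(N) ∩ (ℂ^{n_2} ⊗ ℂ^{n_2}) = {0}, then rank φ(A_1 ⊗ A_2) = 1 whenever rank(A_1 ⊗ A_2) = 1 for A_i ∈ M_{n_i}(ℂ). -/

import Mathlib

open Matrix
open scoped Kronecker

/-- A rank-one matrix over a field factors as an outer product. -/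
lemma rank_one_factor {m n : Type*} [Fintype m] [Fintype n] [DecidableEq n]
    (A : Matrix m n ℂ) (h : A.rank = 1) :
    ∃ w : m → ℂ, ∃ v : n → ℂ, A = vecMulVec w v := by
  rw [Matrix.rank] at h
  obtain ⟨v₀, -, hspan⟩ := finrank_eq_one_iff'.mp h
  choose c hc using fun j =>
    hspan ⟨A.mulVec (Pi.single j 1), LinearMap.mem_range.mpr ⟨Pi.single j 1, rfl⟩⟩
  refine ⟨(v₀ : m → ℂ), c, ?_⟩
  ext i j
  have h1 := congrArg Subtype.val (hc j)
  have h2 := congrFun h1 i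
  simp [Matrix.mulVec_single] at h2
  simp [vecMulVec_apply, ← h2, mul_comm]

/-- An outer product of nonzero vectors has rank one. -/
lemma rank_vecMulVec_eq_one {m n : Type*} [Fintype m] [Fintype n]
    (w : m → ℂ) (v : n → ℂ) (hw : w ≠ 0) (hv : v ≠ 0) :
    (vecMulVec w v).rank = 1 := by
  have hle : (vecMulVec w v).rank ≤ 1 := by
    rw [vecMulVec_eq Unit]
    calc (replicateCol Unit w * replicateRow Unit v).rank ≤ (replicateCol Unit w).rank := rank_mul_le_left _ _
      _ ≤ Fintype.card Unit := rank_le_card_width _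
      _ = 1 := by simp
  have hpos : 0 < (vecMulVec w v).rank := by
    obtain ⟨i, hi⟩ := Function.ne_iff.mp hw
    obtain ⟨j, hj⟩ := Function.ne_iff.mp hv
    classical
    have hne : (vecMulVec w v).mulVec (Pi.single j 1) ≠ 0 := by
      intro h0
      have := congrFun h0 i
      simp [Matrix.mulVec_single, vecMulVec_apply] at this
      tauto
    have : Nontrivial (LinearMap.range (vecMulVec w v).mulVecLin) :=
      nontrivial_of_ne ⟨(vecMulVec w v).mulVec (Pi.single j 1),
        LinearMap.mem_range.mpr ⟨Pi.single j 1, rfl⟩⟩ 0 (by simpa [Subtype.ext_iff] using hne)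
    exact Module.finrank_pos
  omega

lemma mul_vecMulVec_mul {l m n o : Type*} [Fintype m] [Fintype n]
    (M : Matrix l m ℂ) (B : Matrix o n ℂ) (u : m → ℂ) (v : n → ℂ) :
    M * vecMulVec u v * Bᵀ = vecMulVec (M.mulVec u) (B.mulVec v) := by
  ext i j
  simp only [mul_apply, vecMulVec_apply, mulVec, dotProduct, transpose_apply,
    Finset.sum_mul, Finset.mul_sum]
  apply Finset.sum_congr rfl
  intro p _
  apply Finset.sum_congr rfl
  intro q _
  ring


/-- The realignment of `A ∈ M_{n₁ n₂}(ℂ)`, an `n₁² × n₂²` matrix. -/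
def realign {n₁ n₂ : ℕ} (A : Matrix (Fin n₁ × Fin n₂) (Fin n₁ × Fin n₂) ℂ) :
    Matrix (Fin n₁ × Fin n₁) (Fin n₂ × Fin n₂) ℂ :=
  Matrix.of fun p q => A (p.1, q.1) (p.2, q.2)

/-- If `Ker(M) ∩ (ℂ^{n₁} ⊗ ℂ^{n₁}) = {0}` and `Ker(N) ∩ (ℂ^{n₂} ⊗ ℂ^{n₂}) = {0}`,
then `φ(A) = M A^R Nᵀ` sends every rank-one `A₁ ⊗ A₂` to a rank-one matrix. -/
theorem stmt_18 {n₁ n₂ : ℕ}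
    (M : Matrix (Fin (n₁ * n₂)) (Fin n₁ × Fin n₁) ℂ)
    (N : Matrix (Fin (n₁ * n₂)) (Fin n₂ × Fin n₂) ℂ)
    (hM : ∀ x y : Fin n₁ → ℂ,
      M.mulVec (fun p => x p.1 * y p.2) = 0 →
      (fun p : Fin n₁ × Fin n₁ => x p.1 * y p.2) = 0)
    (hN : ∀ x y : Fin n₂ → ℂ,
      N.mulVec (fun p => x p.1 * y p.2) = 0 →
      (fun p : Fin n₂ × Fin n₂ => x p.1 * y p.2) = 0) :
    ∀ (A₁ : Matrix (Fin n₁) (Fin n₁) ℂ) (A₂ : Matrix (Fin n₂) (Fin n₂) ℂ),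
      (A₁ ⊗ₖ A₂).rank = 1 → (M * realign (A₁ ⊗ₖ A₂) * Nᵀ).rank = 1 := by
  intro A₁ A₂ hrank
  -- A₁ and A₂ are nonzero
  have hA1 : A₁ ≠ 0 := by
    rintro rfl; simp at hrank
  have hA2 : A₂ ≠ 0 := by
    rintro rfl; simp at hrank
  obtain ⟨i₀, k₀, h1⟩ : ∃ i k, A₁ i k ≠ 0 := by
    by_contra h; push_neg at h; exact hA1 (by ext i k; simpa using h i k)
  obtain ⟨j₀, l₀, h2⟩ : ∃ j l, A₂ j l ≠ 0 := by
    by_contra h; push_neg at h; exact hA2 (by ext j l; simpa using h j l)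
  obtain ⟨w, v, hwv⟩ := rank_one_factor _ hrank
  have key : ∀ i j k l, A₁ i k * A₂ j l = w (i, j) * v (k, l) := fun i j k l => by
    have := congrFun (congrFun hwv (i, j)) (k, l)
    simpa [kroneckerMap_apply, vecMulVec_apply] using this
  -- factor A₁
  set x : Fin n₁ → ℂ := fun i => w (i, j₀) / A₂ j₀ l₀ with hx
  set y : Fin n₁ → ℂ := fun k => v (k, l₀) with hy
  have hA1f : ∀ i k, A₁ i k = x i * y k := fun i k => by
    simp only [hx, hy]; field_simp
    have := key i j₀ k l₀
    linear_combination this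
  set x' : Fin n₂ → ℂ := fun j => w (i₀, j) / A₁ i₀ k₀ with hx'
  set y' : Fin n₂ → ℂ := fun l => v (k₀, l) with hy'
  have hA2f : ∀ j l, A₂ j l = x' j * y' l := fun j l => by
    simp only [hx', hy']; field_simp
    have := key i₀ j k₀ l
    linear_combination this
  set u : Fin n₁ × Fin n₁ → ℂ := fun p => x p.1 * y p.2 with hu
  set z : Fin n₂ × Fin n₂ → ℂ := fun q => x' q.1 * y' q.2 with hz
  have hre : realign (A₁ ⊗ₖ A₂) = vecMulVec u z := by
    ext p q
    show A₁ p.1 p.2 * A₂ q.1 q.2 = (x p.1 * y p.2) * (x' q.1 * y' q.2)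
    rw [← hA1f, ← hA2f]
  rw [hre, mul_vecMulVec_mul]
  refine rank_vecMulVec_eq_one _ _ ?_ ?_
  · intro h0
    have := congrFun (hM x y h0) (i₀, k₀)
    simp only [Pi.zero_apply] at this
    exact h1 (by rw [hA1f]; exact this)
  · intro h0
    have := congrFun (hN x' y' h0) (j₀, l₀)
    simp only [Pi.zero_apply] at this
    exact h2 (by rw [hA2f]; exact this)
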